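/- Let λ″ > 0 and μ, λ be real. For every ε with 0 < ε < λ″ there exists C_ε > 0 such that Re⟨H_{λ″} φ, φ⟩ ≥ (λ″ − ε) ⟨G φ, φ⟩ − C_ε ‖φ‖² for all φ ∈ D(G); in particular Re⟨H_{λ″} φ, φ⟩ ≥ −C_ε ‖φ‖² for all φ ∈ D(G). -/

import Mathlib

/-!
Formalization of statements about the Gribov operator
`H_{λ″} = λ″ a*³a³ + μ a*a + iλ a*(a + a*)a` acting on the Bargmann space `E`.

The Bargmann space is modelled abstractly: a complex Hilbert space `E` together with a
Hilbert basis `(e n)_{n : ℕ}` (corresponding to `e_n(z) = zⁿ/√n!`).  Operators are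
specified through their action on the basis / on basis coefficients, exactly as in the
paper: `G e_n = n(n-1)(n-2) e_n`,
`H_{μ,λ} e_n = iλ(n-1)√n e_{n-1} + μ n e_n + iλ n √(n+1) e_{n+1}`.
-/

noncomputable section

open Filter Topology MeasureTheory
open scoped InnerProductSpace ComplexInnerProductSpace

/-- Eigenvalues of `G = a*³a³` : `λ_n = n(n-1)(n-2)`. -/
def gEig (n : ℕ) : ℝ := (n : ℝ) * ((n : ℝ) - 1) * ((n : ℝ) - 2)

/-- Basis coefficients of `H_{μ,λ} φ`, where `φ` has basis coefficients `c`: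
`(H_{μ,λ} φ)_m = μ m c_m + iλ ( m √(m+1) c_{m+1} + (m-1) √m c_{m-1} )`
(coming from `H_{μ,λ} e_n = iλ(n-1)√n e_{n-1} + μ n e_n + iλ n √(n+1) e_{n+1}`). -/
def hCoef (μ lam : ℝ) (c : ℕ → ℂ) (m : ℕ) : ℂ :=
  (μ : ℂ) * (m : ℂ) * c m +
    Complex.I * (lam : ℂ) *
      ((m : ℂ) * (Real.sqrt (m + 1) : ℂ) * c (m + 1) +
        ((m : ℂ) - 1) * (Real.sqrt m : ℂ) * c (m - 1))

/-- Basis coefficients of `H_{λ″} φ = (λ″ G + H_{μ,λ}) φ`. -/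
def hlCoef (l'' μ lam : ℝ) (c : ℕ → ℂ) (m : ℕ) : ℂ :=
  (l'' : ℂ) * (gEig m : ℂ) * c m + hCoef μ lam c m

/- ## auxiliary real arithmetic -/

lemma gEig_nonneg (n : ℕ) : 0 ≤ gEig n := by
  unfold gEig
  rcases le_or_gt n 2 with h | h
  · interval_cases n <;> norm_num
  · have h3 : (3:ℝ) ≤ n := by exact_mod_cast h
    nlinarith [mul_nonneg (mul_nonneg (by linarith : (0:ℝ) ≤ (n:ℝ)) (by linarith : (0:ℝ) ≤ (n:ℝ)-1)) (by linarith : (0:ℝ) ≤ (n:ℝ)-2)]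

lemma gEig_lower {n : ℕ} (hn : 3 ≤ n) : 2*(n:ℝ)^3/9 ≤ gEig n := by
  have h3 : (3:ℝ) ≤ n := by exact_mod_cast hn
  unfold gEig
  nlinarith [mul_nonneg (mul_nonneg (by linarith : (0:ℝ) ≤ (n:ℝ)) (by linarith : (0:ℝ) ≤ (n:ℝ)-3)) (by linarith : (0:ℝ) ≤ 7*(n:ℝ)-6)]

lemma pow6_le_gEig (n : ℕ) : (n:ℝ)^6 ≤ 64*(1 + gEig n^2) := by
  rcases le_or_gt n 2 with h | h
  · interval_cases n <;> norm_num [gEig]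
  · have h3 : (3:ℝ) ≤ n := by exact_mod_cast h
    have hl := gEig_lower (by omega : 3 ≤ n)
    have h0 : (0:ℝ) ≤ (n:ℝ)^3 := by positivity
    nlinarith [sq_nonneg (gEig n), gEig_nonneg n]

lemma pow_le_one_add_pow6 (m : ℕ) {k : ℕ} (hk : k ≤ 6) : (m:ℝ)^k ≤ 1 + (m:ℝ)^6 := by
  rcases Nat.eq_zero_or_pos m with h | h
  · subst h
    have : ((0:ℕ):ℝ)^k ≤ 1 := pow_le_one₀ (by norm_num) (by norm_num)
    simpa using this.trans (by norm_num)
  · have h1 : (1:ℝ) ≤ (m:ℝ) := by exact_mod_cast h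
    have := pow_le_pow_right₀ h1 hk
    linarith

lemma keybound (μ ε : ℝ) (hε : 0 < ε) (m : ℕ) :
    -(3 * |μ| + |μ| * (9 * |μ| / (2 * ε)) + 1) ≤ ε * gEig m + μ * m := by
  have hm0 : (0:ℝ) ≤ m := Nat.cast_nonneg m
  have hge : 0 ≤ gEig m := gEig_nonneg m
  have habs : -(|μ| * m) ≤ μ * m := by nlinarith [neg_abs_le μ]
  have hpos1 : (0:ℝ) ≤ |μ| * (9 * |μ| / (2 * ε)) := by positivity
  have hmain : |μ| * m ≤ ε * gEig m + (3 * |μ| + |μ| * (9 * |μ| / (2 * ε)) + 1) := by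
    rcases le_or_gt m 2 with h2 | h2
    · have hm2 : (m:ℝ) ≤ 2 := by exact_mod_cast h2
      nlinarith [abs_nonneg μ, mul_nonneg hε.le hge]
    · have h3 : (3:ℝ) ≤ m := by exact_mod_cast h2
      have hlow := gEig_lower (by omega : 3 ≤ m)
      rcases le_or_gt (9 * |μ| / (2 * ε)) ((m:ℝ)^2) with hc | hc
      · have h9 : 9 * |μ| ≤ 2*ε*(m:ℝ)^2 := by
          rw [div_le_iff₀ (by positivity)] at hc; nlinarith
        nlinarith [mul_le_mul_of_nonneg_right h9 hm0,
          mul_le_mul_of_nonneg_left hlow hε.le, abs_nonneg μ]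
      · have hmm : (m:ℝ) ≤ (m:ℝ)^2 := by nlinarith
        have h1 : |μ| * m ≤ |μ| * (9 * |μ| / (2 * ε)) :=
          mul_le_mul_of_nonneg_left (by linarith) (abs_nonneg μ)
        nlinarith [mul_nonneg hε.le hge, abs_nonneg μ]
  linarith

lemma sq_sum_le (a b c d : ℝ) : (a+b+c+d)^2 ≤ 4*(a^2+b^2+c^2+d^2) := by
  nlinarith [sq_nonneg (a-b), sq_nonneg (a-c), sq_nonneg (a-d), sq_nonneg (b-c),
    sq_nonneg (b-d), sq_nonneg (c-d)]

lemma sqrt_le_add_one (m : ℕ) : Real.sqrt ((m:ℝ)+1) ≤ (m:ℝ)+1 := by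
  have h : (0:ℝ) ≤ (m:ℝ)+1 := by positivity
  nlinarith [Real.sq_sqrt h, Real.sqrt_nonneg ((m:ℝ)+1), Nat.cast_nonneg (α := ℝ) m,
    sq_nonneg (Real.sqrt ((m:ℝ)+1) - 1)]

/- ## auxiliary complex arithmetic -/

lemma conj_mul_self_re (z : ℂ) : ((starRingEnd ℂ) z * z).re = ‖z‖^2 := by
  simp only [Complex.mul_re, Complex.conj_re, Complex.conj_im,
    Complex.sq_norm, Complex.normSq_apply]
  ring

lemma conj_mul_real_mul_re (r : ℝ) (z : ℂ) :
    ((starRingEnd ℂ) z * ((r:ℂ) * z)).re = r * ‖z‖^2 := by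
  simp only [Complex.mul_re, Complex.mul_im, Complex.conj_re, Complex.conj_im,
    Complex.ofReal_re, Complex.ofReal_im, Complex.sq_norm,
    Complex.normSq_apply]
  ring

set_option maxHeartbeats 2000000 in
/-- Let `λ″ > 0` and `μ, λ` real.  For every `0 < ε < λ″` there is
`C_ε > 0` with `Re⟨H_{λ″} φ, φ⟩ ≥ (λ″ - ε) ⟨G φ, φ⟩ - C_ε ‖φ‖²` for all `φ ∈ D(G)`;
in particular `Re⟨H_{λ″} φ, φ⟩ ≥ -C_ε ‖φ‖²` on `D(G)`. -/
theorem gribov_Hl_form_lower_bound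
    {E : Type} [NormedAddCommGroup E] [InnerProductSpace ℂ E] [CompleteSpace E]
    (e : HilbertBasis ℕ ℂ E) (l'' μ lam : ℝ) (hl'' : 0 < l'') (G Hl : E →ₗ.[ℂ] E)
    (hGdom : ∀ φ : E, φ ∈ G.domain ↔ Summable fun n : ℕ => gEig n ^ 2 * ‖e.repr φ n‖ ^ 2)
    (hGact : ∀ (φ : G.domain) (n : ℕ), e.repr (G φ) n = (gEig n : ℂ) * e.repr (φ : E) n)
    (hHldom : ∀ φ : E,
      φ ∈ Hl.domain ↔ Summable fun m : ℕ => ‖hlCoef l'' μ lam (fun n => e.repr φ n) m‖ ^ 2)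
    (hHlact : ∀ (φ : Hl.domain) (m : ℕ),
      e.repr (Hl φ) m = hlCoef l'' μ lam (fun n => e.repr (φ : E) n) m) :
    ∀ ε : ℝ, 0 < ε → ε < l'' → ∃ C : ℝ, 0 < C ∧
      ∀ φ : G.domain, ∃ h : (φ : E) ∈ Hl.domain,
        (l'' - ε) * (⟪(φ : E), G φ⟫).re - C * ‖(φ : E)‖ ^ 2 ≤
            (⟪(φ : E), Hl ⟨(φ : E), h⟩⟫).re ∧
          -C * ‖(φ : E)‖ ^ 2 ≤ (⟪(φ : E), Hl ⟨(φ : E), h⟩⟫).re := by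
  intro ε hε hεl
  set C : ℝ := 3 * |μ| + |μ| * (9 * |μ| / (2 * ε)) + 1 with hCdef
  have hC : 0 < C := by rw [hCdef]; positivity
  have hkey : ∀ m : ℕ, -C ≤ ε * gEig m + μ * m := fun m => by
    rw [hCdef]; exact keybound μ ε hε m
  refine ⟨C, hC, ?_⟩
  intro φ
  set c : ℕ → ℂ := fun n => e.repr (φ:E) n with hc
  have hcn : ∀ n, e.repr (φ:E) n = c n := fun n => rfl
  -- basic summability facts
  have hG2 : Summable fun n => gEig n ^ 2 * ‖c n‖ ^ 2 := by
    have h := (hGdom (φ:E)).1 φ.2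
    simp only [hcn] at h
    exact h
  have hreterm : ∀ (x y : E),
      (fun n => ⟪x, e n⟫ * ⟪e n, y⟫) = fun n => (starRingEnd ℂ) (e.repr x n) * e.repr y n := by
    intro x y; funext n
    rw [e.repr_apply_apply, e.repr_apply_apply, inner_conj_symm]
  have hinnerRe : ∀ y : E,
      (⟪(φ:E), y⟫).re = ∑' n, ((starRingEnd ℂ) (c n) * e.repr y n).re := by
    intro y
    rw [← e.tsum_inner_mul_inner (φ:E) y, Complex.re_tsum (e.summable_inner_mul_inner _ _)]
    exact tsum_congr fun n => by rw [congrFun (hreterm (φ:E) y) n, hcn n]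
  have hinnerSumm : ∀ y : E, Summable fun n => ((starRingEnd ℂ) (c n) * e.repr y n).re := by
    intro y
    have h := (Complex.hasSum_re (e.hasSum_inner_mul_inner (φ:E) y)).summable
    refine h.congr fun n => ?_
    rw [congrFun (hreterm (φ:E) y) n, hcn n]
  have hsq : Summable fun n => ‖c n‖ ^ 2 := by
    refine (hinnerSumm (φ:E)).congr fun n => ?_
    rw [hcn n]; exact conj_mul_self_re _
  have h6 : Summable fun n : ℕ => (n:ℝ)^6 * ‖c n‖^2 := by
    refine Summable.of_nonneg_of_le (fun n => by positivity) (fun n => ?_)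
      ((hsq.mul_left 64).add (hG2.mul_left 64))
    have h := pow6_le_gEig n
    have h2 : (0:ℝ) ≤ ‖c n‖^2 := by positivity
    nlinarith
  have hMas : Summable fun n : ℕ => (1 + (n:ℝ)^6) * ‖c n‖^2 :=
    (hsq.add h6).congr fun n => by ring
  have hMas1 : Summable fun n : ℕ => (1 + ((n:ℝ)+1)^6) * ‖c (n+1)‖^2 := by
    have h := (summable_nat_add_iff 1).2 hMas
    refine h.congr fun n => ?_
    push_cast
    ring
  -- domain membership
  have hnormCoef : ∀ m : ℕ, ‖hlCoef l'' μ lam c m‖ ≤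
      |l'' * gEig m| * ‖c m‖ + |μ * (m:ℝ)| * ‖c m‖
      + |lam| * ((m:ℝ) * Real.sqrt ((m:ℝ)+1)) * ‖c (m+1)‖
      + |lam| * (|(m:ℝ)-1| * Real.sqrt (m:ℝ)) * ‖c (m-1)‖ := by
    intro m
    have eA : ‖(l'':ℂ) * (gEig m:ℂ) * c m‖ = |l'' * gEig m| * ‖c m‖ := by
      rw [norm_mul, norm_mul, Complex.norm_real, Complex.norm_real, Real.norm_eq_abs,
        Real.norm_eq_abs, abs_mul]
    have eB : ‖(μ:ℂ) * (m:ℂ) * c m‖ = |μ * (m:ℝ)| * ‖c m‖ := by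
      rw [norm_mul, norm_mul, Complex.norm_real, Complex.norm_natCast, Real.norm_eq_abs,
        abs_mul, abs_of_nonneg (Nat.cast_nonneg (α := ℝ) m)]
    have eT1 : ‖(m:ℂ) * (Real.sqrt ((m:ℝ)+1):ℂ) * c (m+1)‖
        = (m:ℝ) * Real.sqrt ((m:ℝ)+1) * ‖c (m+1)‖ := by
      rw [norm_mul, norm_mul, Complex.norm_natCast, Complex.norm_real, Real.norm_eq_abs,
        abs_of_nonneg (Real.sqrt_nonneg _)]
    have eT2 : ‖((m:ℂ)-1) * (Real.sqrt (m:ℝ):ℂ) * c (m-1)‖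
        = |(m:ℝ)-1| * Real.sqrt (m:ℝ) * ‖c (m-1)‖ := by
      rw [norm_mul, norm_mul, Complex.norm_real, Real.norm_eq_abs,
        abs_of_nonneg (Real.sqrt_nonneg _),
        show ((m:ℂ) - 1) = (((m:ℝ) - 1 : ℝ) : ℂ) by push_cast; ring,
        Complex.norm_real, Real.norm_eq_abs]
    have hrest : ‖(μ:ℂ) * (m:ℂ) * c m + Complex.I * (lam:ℂ) *
        ((m:ℂ) * (Real.sqrt ((m:ℝ)+1):ℂ) * c (m+1)
          + ((m:ℂ)-1) * (Real.sqrt (m:ℝ):ℂ) * c (m-1))‖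
        ≤ |μ * (m:ℝ)| * ‖c m‖ + (|lam| * ((m:ℝ) * Real.sqrt ((m:ℝ)+1)) * ‖c (m+1)‖
          + |lam| * (|(m:ℝ)-1| * Real.sqrt (m:ℝ)) * ‖c (m-1)‖) := by
      refine (norm_add_le _ _).trans ?_
      rw [eB]
      refine add_le_add (le_refl _) ?_
      calc ‖Complex.I * (lam:ℂ) * ((m:ℂ) * (Real.sqrt ((m:ℝ)+1):ℂ) * c (m+1)
              + ((m:ℂ)-1) * (Real.sqrt (m:ℝ):ℂ) * c (m-1))‖
          = |lam| * ‖(m:ℂ) * (Real.sqrt ((m:ℝ)+1):ℂ) * c (m+1)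
              + ((m:ℂ)-1) * (Real.sqrt (m:ℝ):ℂ) * c (m-1)‖ := by
            rw [norm_mul, norm_mul, Complex.norm_I, one_mul, Complex.norm_real,
              Real.norm_eq_abs]
        _ ≤ |lam| * (‖(m:ℂ) * (Real.sqrt ((m:ℝ)+1):ℂ) * c (m+1)‖
              + ‖((m:ℂ)-1) * (Real.sqrt (m:ℝ):ℂ) * c (m-1)‖) :=
            mul_le_mul_of_nonneg_left (norm_add_le _ _) (abs_nonneg lam)
        _ = |lam| * ((m:ℝ) * Real.sqrt ((m:ℝ)+1)) * ‖c (m+1)‖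
              + |lam| * (|(m:ℝ)-1| * Real.sqrt (m:ℝ)) * ‖c (m-1)‖ := by
            rw [eT1, eT2]; ring
    have hfin : ‖hlCoef l'' μ lam c m‖ ≤ ‖(l'':ℂ) * (gEig m:ℂ) * c m‖
        + ‖(μ:ℂ) * (m:ℂ) * c m + Complex.I * (lam:ℂ) *
        ((m:ℂ) * (Real.sqrt ((m:ℝ)+1):ℂ) * c (m+1)
          + ((m:ℂ)-1) * (Real.sqrt (m:ℝ):ℂ) * c (m-1))‖ := by
      simp only [hlCoef, hCoef]
      exact norm_add_le _ _
    rw [eA] at hfin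
    linarith [hrest]
  have hbound : ∀ m : ℕ, ‖hlCoef l'' μ lam c m‖^2 ≤
      4*((|l'' * gEig m| * ‖c m‖)^2 + (|μ * (m:ℝ)| * ‖c m‖)^2
        + (|lam| * ((m:ℝ) * Real.sqrt ((m:ℝ)+1)) * ‖c (m+1)‖)^2
        + (|lam| * (|(m:ℝ)-1| * Real.sqrt (m:ℝ)) * ‖c (m-1)‖)^2) := by
    intro m
    exact (pow_le_pow_left₀ (norm_nonneg _) (hnormCoef m) 2).trans (sq_sum_le _ _ _ _)
  have S1 : Summable fun m => (|l'' * gEig m| * ‖c m‖)^2 := by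
    refine (hG2.mul_left (l''^2)).congr fun m => ?_
    rw [mul_pow, sq_abs, mul_pow]
    ring
  have S2 : Summable fun m : ℕ => (|μ * (m:ℝ)| * ‖c m‖)^2 := by
    refine Summable.of_nonneg_of_le (fun m => by positivity) (fun m => ?_)
      (hMas.mul_left (μ^2))
    have h2 := pow_le_one_add_pow6 m (k := 2) (by norm_num)
    have hn : (0:ℝ) ≤ ‖c m‖^2 := by positivity
    calc (|μ * (m:ℝ)| * ‖c m‖)^2 = μ^2 * ((m:ℝ)^2 * ‖c m‖^2) := by
          rw [mul_pow, sq_abs, mul_pow]; ring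
      _ ≤ μ^2 * ((1+(m:ℝ)^6) * ‖c m‖^2) :=
          mul_le_mul_of_nonneg_left (mul_le_mul_of_nonneg_right h2 hn) (sq_nonneg μ)
  have S3 : Summable fun m : ℕ => (|lam| * ((m:ℝ) * Real.sqrt ((m:ℝ)+1)) * ‖c (m+1)‖)^2 := by
    refine Summable.of_nonneg_of_le (fun m => by positivity) (fun m => ?_)
      (hMas1.mul_left (lam^2))
    have hx : (0:ℝ) ≤ (m:ℝ) := Nat.cast_nonneg m
    have haux : (m:ℝ)^2*((m:ℝ)+1) ≤ 1+((m:ℝ)+1)^6 := by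
      have h3 : ((m:ℝ)+1)^3 ≤ 1 + ((m:ℝ)+1)^6 := by
        have h := pow_le_one_add_pow6 (m+1) (k := 3) (by norm_num)
        push_cast at h
        exact h
      nlinarith
    calc (|lam| * ((m:ℝ) * Real.sqrt ((m:ℝ)+1)) * ‖c (m+1)‖)^2
        = lam^2 * (((m:ℝ)^2*((m:ℝ)+1)) * ‖c (m+1)‖^2) := by
          rw [mul_pow, mul_pow, sq_abs, mul_pow, Real.sq_sqrt (by positivity : (0:ℝ) ≤ (m:ℝ)+1)]
          ring
      _ ≤ lam^2 * ((1+((m:ℝ)+1)^6) * ‖c (m+1)‖^2) :=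
          mul_le_mul_of_nonneg_left (mul_le_mul_of_nonneg_right haux (by positivity))
            (sq_nonneg lam)
  have S4 : Summable fun m : ℕ => (|lam| * (|(m:ℝ)-1| * Real.sqrt (m:ℝ)) * ‖c (m-1)‖)^2 := by
    have S4' : Summable fun m : ℕ =>
        (|lam| * (|((m+1:ℕ):ℝ)-1| * Real.sqrt ((m+1:ℕ):ℝ)) * ‖c (m+1-1)‖)^2 := by
      refine Summable.of_nonneg_of_le (fun m => by positivity) (fun m => ?_)
        (hMas.mul_left (2*lam^2))
      have hx : (0:ℝ) ≤ (m:ℝ) := Nat.cast_nonneg m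
      have h2 := pow_le_one_add_pow6 m (k := 2) (by norm_num)
      have h3 := pow_le_one_add_pow6 m (k := 3) (by norm_num)
      have haux : (m:ℝ)^2*((m:ℝ)+1) ≤ 2*(1+(m:ℝ)^6) := by nlinarith
      calc (|lam| * (|((m+1:ℕ):ℝ)-1| * Real.sqrt ((m+1:ℕ):ℝ)) * ‖c (m+1-1)‖)^2
          = lam^2 * (((m:ℝ)^2*((m:ℝ)+1)) * ‖c m‖^2) := by
            rw [Nat.add_sub_cancel, mul_pow, mul_pow, mul_pow, sq_abs, sq_abs,
              Real.sq_sqrt (by positivity : (0:ℝ) ≤ ((m+1:ℕ):ℝ))]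
            push_cast
            ring
        _ ≤ 2*lam^2 * ((1+(m:ℝ)^6) * ‖c m‖^2) := by
            nlinarith [sq_nonneg lam, sq_nonneg (‖c m‖), mul_nonneg (sq_nonneg lam) (sq_nonneg (‖c m‖))]
    exact (summable_nat_add_iff 1).1 S4'
  have hdomSum : Summable fun m => ‖hlCoef l'' μ lam c m‖^2 :=
    Summable.of_nonneg_of_le (fun m => by positivity) hbound
      ((((S1.add S2).add S3).add S4).mul_left 4)
  have hdom : (φ:E) ∈ Hl.domain := by
    rw [hHldom, ← hc]
    exact hdomSum
  -- off-diagonal real parts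
  set v : ℕ → ℝ := fun m =>
    ((starRingEnd ℂ) (c m) *
      (Complex.I * (lam:ℂ) * ((m:ℂ) * (Real.sqrt ((m:ℝ)+1):ℂ)) * c (m+1))).re with hv
  set w : ℕ → ℝ := fun m =>
    ((starRingEnd ℂ) (c m) *
      (Complex.I * (lam:ℂ) * (((m:ℂ)-1) * (Real.sqrt (m:ℝ):ℂ)) * c (m-1))).re with hw
  have hsplitRe : ∀ m : ℕ, ((starRingEnd ℂ) (c m) * hlCoef l'' μ lam c m).re
      = (l''*gEig m + μ*(m:ℝ))*‖c m‖^2 + v m + w m := by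
    intro m
    simp only [hv, hw, hlCoef, hCoef, Complex.add_re, Complex.mul_re, Complex.mul_im,
      Complex.add_im, Complex.sub_re, Complex.sub_im, Complex.I_re, Complex.I_im,
      Complex.ofReal_re, Complex.ofReal_im, Complex.natCast_re, Complex.natCast_im,
      Complex.conj_re, Complex.conj_im, Complex.one_re, Complex.one_im,
      Complex.sq_norm, Complex.normSq_apply]
    ring
  have hw0 : w 0 = 0 := by
    simp [hw, Real.sqrt_zero]
  have hwv : ∀ m : ℕ, w (m+1) = -(v m) := by
    intro m
    simp only [hv, hw, Nat.add_sub_cancel]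
    push_cast
    simp only [Complex.mul_re, Complex.mul_im, Complex.sub_re, Complex.sub_im,
      Complex.add_re, Complex.add_im, Complex.I_re, Complex.I_im, Complex.ofReal_re,
      Complex.ofReal_im, Complex.natCast_re, Complex.natCast_im, Complex.conj_re,
      Complex.conj_im, Complex.one_re, Complex.one_im]
    ring
  have hW1 : ∀ m : ℕ, (m:ℝ) * Real.sqrt ((m:ℝ)+1) ≤ 2*(1+(m:ℝ)^6) := by
    intro m
    have hs := sqrt_le_add_one m
    have hx : (0:ℝ) ≤ (m:ℝ) := Nat.cast_nonneg m
    have h1 := pow_le_one_add_pow6 m (k := 1) (by norm_num)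
    have h2 := pow_le_one_add_pow6 m (k := 2) (by norm_num)
    have h3 := mul_le_mul_of_nonneg_left hs hx
    nlinarith
  have hW2 : ∀ m : ℕ, (m:ℝ) * Real.sqrt ((m:ℝ)+1) ≤ 2*(1+((m:ℝ)+1)^6) := by
    intro m
    have hs := sqrt_le_add_one m
    have hx : (0:ℝ) ≤ (m:ℝ) := Nat.cast_nonneg m
    have h2 : ((m:ℝ)+1)^2 ≤ 1 + ((m:ℝ)+1)^6 := by
      have h := pow_le_one_add_pow6 (m+1) (k := 2) (by norm_num)
      push_cast at h
      exact h
    have h3 := mul_le_mul_of_nonneg_left hs hx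
    nlinarith
  have hvnorm : ∀ m : ℕ, |v m| ≤ |lam| * ((1+(m:ℝ)^6) * ‖c m‖^2)
      + |lam| * ((1+((m:ℝ)+1)^6) * ‖c (m+1)‖^2) := by
    intro m
    have h2 : ‖(starRingEnd ℂ) (c m) *
        (Complex.I * (lam:ℂ) * ((m:ℂ) * (Real.sqrt ((m:ℝ)+1):ℂ)) * c (m+1))‖
        = |lam| * (((m:ℝ) * Real.sqrt ((m:ℝ)+1)) * (‖c m‖ * ‖c (m+1)‖)) := by
      simp only [norm_mul, RCLike.norm_conj, Complex.norm_I, Complex.norm_real,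
        Complex.norm_natCast, Real.norm_eq_abs, one_mul]
      rw [abs_of_nonneg (Real.sqrt_nonneg _)]
      ring
    have h1 : |v m| ≤ ‖(starRingEnd ℂ) (c m) *
        (Complex.I * (lam:ℂ) * ((m:ℂ) * (Real.sqrt ((m:ℝ)+1):ℂ)) * c (m+1))‖ := by
      simp only [hv]
      exact Complex.abs_re_le_norm _
    have hW0 : (0:ℝ) ≤ (m:ℝ) * Real.sqrt ((m:ℝ)+1) :=
      mul_nonneg (Nat.cast_nonneg m) (Real.sqrt_nonneg _)
    have hab : ((m:ℝ) * Real.sqrt ((m:ℝ)+1)) * (‖c m‖ * ‖c (m+1)‖)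
        ≤ (1+(m:ℝ)^6) * ‖c m‖^2 + (1+((m:ℝ)+1)^6) * ‖c (m+1)‖^2 := by
      have s1 : ((m:ℝ) * Real.sqrt ((m:ℝ)+1)) * (‖c m‖ * ‖c (m+1)‖)
          ≤ ((m:ℝ) * Real.sqrt ((m:ℝ)+1)) * ((‖c m‖^2 + ‖c (m+1)‖^2)/2) :=
        mul_le_mul_of_nonneg_left (by nlinarith [sq_nonneg (‖c m‖ - ‖c (m+1)‖)]) hW0
      have s2 := mul_le_mul_of_nonneg_right (hW1 m) (sq_nonneg (‖c m‖))
      have s3 := mul_le_mul_of_nonneg_right (hW2 m) (sq_nonneg (‖c (m+1)‖))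
      nlinarith [s1, s2, s3]
    calc |v m| ≤ |lam| * (((m:ℝ) * Real.sqrt ((m:ℝ)+1)) * (‖c m‖ * ‖c (m+1)‖)) := by
          rw [← h2]; exact h1
      _ ≤ |lam| * ((1+(m:ℝ)^6) * ‖c m‖^2 + (1+((m:ℝ)+1)^6) * ‖c (m+1)‖^2) :=
          mul_le_mul_of_nonneg_left hab (abs_nonneg lam)
      _ = |lam| * ((1+(m:ℝ)^6) * ‖c m‖^2) + |lam| * ((1+((m:ℝ)+1)^6) * ‖c (m+1)‖^2) := by
          ring
  have Srv : Summable v :=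
    Summable.of_norm_bounded ((hMas.mul_left |lam|).add (hMas1.mul_left |lam|))
      (fun m => by rw [Real.norm_eq_abs]; exact hvnorm m)
  have Srw : Summable w :=
    (summable_nat_add_iff 1).1 ((Srv.neg).congr fun m => (hwv m).symm)
  have hmsum : Summable fun m : ℕ => (m:ℝ)*‖c m‖^2 := by
    refine Summable.of_nonneg_of_le (fun m => by positivity) (fun m => ?_) hMas
    have h1 := pow_le_one_add_pow6 m (k := 1) (by norm_num)
    have h0 := sq_nonneg (‖c m‖)
    nlinarith
  have hgsum0 : Summable fun m : ℕ => gEig m*‖c m‖^2 := by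
    refine Summable.of_nonneg_of_le
      (fun m => mul_nonneg (gEig_nonneg m) (sq_nonneg _)) (fun m => ?_) (hsq.add hG2)
    nlinarith [mul_nonneg (sq_nonneg (gEig m - 1)) (sq_nonneg (‖c m‖)),
      mul_nonneg (gEig_nonneg m) (sq_nonneg (‖c m‖))]
  have Sru : Summable fun m : ℕ => (l''*gEig m + μ*(m:ℝ))*‖c m‖^2 :=
    ((hgsum0.mul_left l'').add (hmsum.mul_left μ)).congr fun m => by ring
  have hterm : ∀ m : ℕ, ((starRingEnd ℂ) (c m) * e.repr ((Hl ⟨(φ:E), hdom⟩ : E)) m).re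
      = (l''*gEig m + μ*(m:ℝ))*‖c m‖^2 + v m + w m := by
    intro m
    rw [hHlact ⟨(φ:E), hdom⟩ m]
    exact hsplitRe m
  have hHre : (⟪(φ:E), (Hl ⟨(φ:E), hdom⟩ : E)⟫).re
      = ∑' m, (l''*gEig m + μ*(m:ℝ))*‖c m‖^2 := by
    rw [hinnerRe, tsum_congr hterm, Summable.tsum_add (Sru.add Srv) Srw, Summable.tsum_add Sru Srv]
    have hw_eq : ∑' m, w m = - ∑' m, v m := by
      rw [Summable.tsum_eq_zero_add Srw, hw0, zero_add, tsum_congr hwv, tsum_neg]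
    rw [hw_eq]; ring
  have hGre : (⟪(φ:E), (G φ : E)⟫).re = ∑' m, gEig m * ‖c m‖^2 := by
    rw [hinnerRe]
    refine tsum_congr fun m => ?_
    rw [hGact φ m, hcn m]
    exact conj_mul_real_mul_re _ _
  have hnormφ : ‖(φ:E)‖^2 = ∑' m, ‖c m‖^2 := by
    have h2 : (⟪(φ:E), (φ:E)⟫).re = ‖(φ:E)‖^2 := by
      rw [← RCLike.re_to_complex]
      exact inner_self_eq_norm_sq _
    rw [← h2, hinnerRe]
    exact tsum_congr fun m => by rw [hcn m]; exact conj_mul_self_re _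
  have hmain : (l''-ε)*(⟪(φ:E), (G φ : E)⟫).re - C*‖(φ:E)‖^2
      ≤ (⟪(φ:E), (Hl ⟨(φ:E), hdom⟩ : E)⟫).re := by
    rw [hHre, hGre, hnormφ]
    have hL : Summable fun m : ℕ => ((l''-ε)*gEig m - C)*‖c m‖^2 :=
      ((hgsum0.mul_left (l''-ε)).sub (hsq.mul_left C)).congr fun m => by ring
    have h1 : (l''-ε)*(∑' m, gEig m*‖c m‖^2) - C*(∑' m, ‖c m‖^2)
        = ∑' m, ((l''-ε)*gEig m - C)*‖c m‖^2 := by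
      rw [← tsum_mul_left, ← tsum_mul_left,
        ← Summable.tsum_sub (hgsum0.mul_left (l''-ε)) (hsq.mul_left C)]
      exact tsum_congr fun m => by ring
    rw [h1]
    refine Summable.tsum_le_tsum (fun m => ?_) hL Sru
    have hk := hkey m
    have h0 : (0:ℝ) ≤ ‖c m‖^2 := sq_nonneg _
    nlinarith [mul_nonneg (by linarith : (0:ℝ) ≤ ε*gEig m + μ*(m:ℝ) + C) h0]
  have hpos : 0 ≤ (l''-ε)*(⟪(φ:E), (G φ : E)⟫).re := by
    rw [hGre]
    exact mul_nonneg (by linarith)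
      (tsum_nonneg fun m => mul_nonneg (gEig_nonneg m) (sq_nonneg _))
  exact ⟨hdom, hmain, by linarith [hmain, hpos]⟩
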